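/- (Quasi-optimality bound of T-HOSVD type.) Let A be an order-N tensor in ℝ^{I_1×⋯×I_N} and for each n let Q_n ∈ ℝ^{I_n×μ_n} have orthonormal columns. Then ‖A − A ×_1 (Q_1 Q_1^T) ×_2 (Q_2 Q_2^T) ⋯ ×_N (Q_N Q_N^T)‖_F^2 ≤ ∑_{n=1}^N ‖A − A ×_n (Q_n Q_n^T)‖_F^2. -/

import Mathlib

open Matrix

noncomputable section

/-- Frobenius norm of a tensor (any finitely indexed real array). -/
def tnorm {ι : Type*} [Fintype ι] (A : ι → ℝ) : ℝ :=
  Real.sqrt (∑ x, A x ^ 2)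

/-- Mode-`n` product of a tensor with a square matrix (keeps the dimensions). -/
def tmul {N : ℕ} {I : Fin N → ℕ} (A : (∀ n, Fin (I n)) → ℝ) (n : Fin N)
    (B : Matrix (Fin (I n)) (Fin (I n)) ℝ) : (∀ m, Fin (I m)) → ℝ :=
  fun x => ∑ j : Fin (I n), B (x n) j * A (Function.update x n j)

/-- The multi-mode product `A ×₁ P 1 ×₂ P 2 ⋯ ×_N P N` with square matrices. -/
def multiProj {N : ℕ} {I : Fin N → ℕ} (A : (∀ n, Fin (I n)) → ℝ)
    (P : ∀ n, Matrix (Fin (I n)) (Fin (I n)) ℝ) : (∀ n, Fin (I n)) → ℝ :=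
  fun x => ∑ j : ∀ n, Fin (I n), (∏ n, P n (x n) (j n)) * A j

/-- Simultaneous compression `A ×_m (Q m)ᵀ` over all modes `m ∈ S`. -/
def compress {N : ℕ} {I μ : Fin N → ℕ} (A : (∀ n, Fin (I n)) → ℝ)
    (S : Finset (Fin N)) (Q : ∀ n, Matrix (Fin (I n)) (Fin (μ n)) ℝ) :
    (∀ m, Fin (if m ∈ S then μ m else I m)) → ℝ :=
  fun x => ∑ j : ∀ m : {m : Fin N // m ∈ S}, Fin (I m.val),
    (∏ m : {m : Fin N // m ∈ S}, Q m.val (j m) (Fin.cast (if_pos m.property) (x m.val))) *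
      A (fun m => if h : m ∈ S then j ⟨m, h⟩ else Fin.cast (if_neg h) (x m))

/-- Mode-`n` product of a tensor with a (possibly rectangular) matrix. -/
def modeProd {N : ℕ} {I : Fin N → ℕ} {J : ℕ} (A : (∀ n, Fin (I n)) → ℝ)
    (n : Fin N) (B : Matrix (Fin J) (Fin (I n)) ℝ) :
    (∀ m, Fin (Function.update I n J m)) → ℝ :=
  fun x => ∑ i : Fin (I n),
    B (Fin.cast (Function.update_self n J I) (x n)) i *
      A (fun m => if h : m = n then Fin.cast (congrArg I h).symm i
                  else Fin.cast (Function.update_of_ne h J I) (x m))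

/-- Mode-`n` unfolding of a tensor. -/
def unfold {N : ℕ} {D : Fin N → ℕ} (A : (∀ m, Fin (D m)) → ℝ) (n : Fin N) :
    Matrix (Fin (D n)) (∀ m : {m : Fin N // m ≠ n}, Fin (D m.val)) ℝ :=
  Matrix.of fun i x =>
    A (fun m => if h : m = n then Fin.cast (congrArg D h).symm i else x ⟨m, h⟩)
section helpers
variable {N : ℕ} {I : Fin N → ℕ}

lemma multiProj_one (A : (∀ n, Fin (I n)) → ℝ) :
    multiProj A (fun _ => (1 : Matrix _ _ ℝ)) = A := by
  funext x
  unfold multiProj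
  rw [Fintype.sum_eq_single x]
  · simp [Matrix.one_apply]
  · intro j hj
    obtain ⟨n, hn⟩ := Function.ne_iff.mp hj
    rw [Finset.prod_eq_zero (Finset.mem_univ n)]
    · ring
    · simp [Matrix.one_apply, (Ne.symm hn)]

lemma tmul_multiProj (A : (∀ n, Fin (I n)) → ℝ)
    (P : ∀ n, Matrix (Fin (I n)) (Fin (I n)) ℝ) (n : Fin N)
    (B : Matrix (Fin (I n)) (Fin (I n)) ℝ) :
    tmul (multiProj A P) n B = multiProj A (Function.update P n (B * P n)) := by
  funext x
  unfold tmul multiProj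
  simp only [Finset.mul_sum]
  rw [Finset.sum_comm]
  refine Finset.sum_congr rfl fun k _ => ?_
  have key : ∀ Pn : Matrix (Fin (I n)) (Fin (I n)) ℝ, ∀ z : ∀ m, Fin (I m),
      ∏ m, (Function.update P n Pn) m (z m) (k m)
        = Pn (z n) (k n) * ∏ m ∈ {n}ᶜ, P m (z m) (k m) := by
    intro Pn z
    rw [Fintype.prod_eq_mul_prod_compl n]
    simp only [Function.update_self]
    congr 1
    refine Finset.prod_congr rfl fun m hm => ?_
    have hmn : m ≠ n := by simpa using hm
    rw [Function.update_of_ne hmn]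
  have hx : ∀ y : Fin (I n), ∏ m ∈ {n}ᶜ, P m ((Function.update x n y) m) (k m)
      = ∏ m ∈ {n}ᶜ, P m (x m) (k m) := by
    intro y
    refine Finset.prod_congr rfl fun m hm => ?_
    have hmn : m ≠ n := by simpa using hm
    rw [Function.update_of_ne hmn]
  have key2 : ∀ y : Fin (I n),
      ∏ m, P m ((Function.update x n y) m) (k m)
        = P n y (k n) * ∏ m ∈ {n}ᶜ, P m (x m) (k m) := by
    intro y
    have h := key (P n) (Function.update x n y)
    rw [Function.update_eq_self] at h
    rw [h, Function.update_self, hx]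
  rw [key (B * P n) x, Matrix.mul_apply]
  simp only [key2, Finset.sum_mul]
  refine Finset.sum_congr rfl fun j _ => ?_
  ring

def modeSwap (n : Fin N) : ((∀ m, Fin (I m)) × Fin (I n)) ≃ ((∀ m, Fin (I m)) × Fin (I n)) where
  toFun p := (Function.update p.1 n p.2, p.1 n)
  invFun p := (Function.update p.1 n p.2, p.1 n)
  left_inv p := by
    simp [Function.update_idem, Function.update_self, Function.update_eq_self]
  right_inv p := by
    simp [Function.update_idem, Function.update_self, Function.update_eq_self]

lemma tmul_adjoint (A C : (∀ n, Fin (I n)) → ℝ) (n : Fin N)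
    (B : Matrix (Fin (I n)) (Fin (I n)) ℝ) :
    ∑ x, tmul A n B x * C x = ∑ x, A x * tmul C n Bᵀ x := by
  unfold tmul
  simp only [Finset.sum_mul, Finset.mul_sum]
  rw [← Fintype.sum_prod_type', ← Fintype.sum_prod_type']
  rw [← Equiv.sum_comp (modeSwap n) _]
  refine Finset.sum_congr rfl fun p _ => ?_
  simp [modeSwap, Matrix.transpose_apply, Function.update_idem, Function.update_self,
    Function.update_eq_self]
  ring

lemma tmul_tmul (A : (∀ n, Fin (I n)) → ℝ) (n : Fin N)
    (B C : Matrix (Fin (I n)) (Fin (I n)) ℝ) :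
    tmul (tmul A n B) n C = tmul A n (C * B) := by
  funext x
  unfold tmul
  simp only [Finset.mul_sum, Matrix.mul_apply, Finset.sum_mul]
  rw [Finset.sum_comm]
  refine Finset.sum_congr rfl fun k _ => ?_
  refine Finset.sum_congr rfl fun j _ => ?_
  rw [Function.update_idem, Function.update_self]
  ring

lemma tmul_sub (A B : (∀ n, Fin (I n)) → ℝ) (n : Fin N)
    (M : Matrix (Fin (I n)) (Fin (I n)) ℝ) :
    tmul (fun x => A x - B x) n M = fun x => tmul A n M x - tmul B n M x := by
  funext x
  simp [tmul, mul_sub, Finset.sum_sub_distrib]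

end helpers

section mainpart
variable {N : ℕ} {I : Fin N → ℕ}

lemma tmul_contract (w : (∀ n, Fin (I n)) → ℝ) (n : Fin N)
    (P : Matrix (Fin (I n)) (Fin (I n)) ℝ) (hPP : P * P = P) (hPT : Pᵀ = P) :
    ∑ x, tmul w n P x ^ 2 ≤ ∑ x, w x ^ 2 := by
  set t := ∑ x, tmul w n P x ^ 2 with ht
  have ht0 : 0 ≤ t := Finset.sum_nonneg fun x _ => sq_nonneg _
  have hinner : t = ∑ x, w x * tmul w n P x := by
    rw [ht]
    simp only [sq]
    rw [tmul_adjoint, tmul_tmul]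
    rw [hPT, hPP]
  have hcs2 : t ^ 2 ≤ (∑ x, w x ^ 2) * t := by
    have h := Finset.sum_mul_sq_le_sq_mul_sq Finset.univ w (fun x => tmul w n P x)
    calc t ^ 2 = (∑ x, w x * tmul w n P x) ^ 2 := by rw [hinner]
      _ ≤ (∑ x, w x ^ 2) * ∑ x, tmul w n P x ^ 2 := h
      _ = (∑ x, w x ^ 2) * t := rfl
  rcases eq_or_lt_of_le ht0 with h | h
  · rw [← h]; exact Finset.sum_nonneg fun x _ => sq_nonneg _
  · nlinarith [hcs2, h]

lemma cross_zero (A w : (∀ n, Fin (I n)) → ℝ) (n : Fin N)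
    (P : Matrix (Fin (I n)) (Fin (I n)) ℝ) (hPP : P * P = P) (hPT : Pᵀ = P) :
    ∑ x, (A x - tmul A n P x) * tmul w n P x = 0 := by
  have h1 : ∑ x, (A x - tmul A n P x) * tmul w n P x
      = ∑ x, tmul (fun y => A y - tmul A n P y) n Pᵀ x * w x := by
    rw [tmul_adjoint]
    rw [Matrix.transpose_transpose]
  rw [h1, hPT, tmul_sub, tmul_tmul, hPP]
  simp

end mainpart

/-- Quasi-optimality bound of T-HOSVD type. -/
theorem stmt6 {N : ℕ} {I μ : Fin N → ℕ} (A : (∀ n, Fin (I n)) → ℝ)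
    (Q : ∀ n, Matrix (Fin (I n)) (Fin (μ n)) ℝ) (hQ : ∀ n, (Q n)ᵀ * Q n = 1) :
    tnorm (fun x => A x - multiProj A (fun n => Q n * (Q n)ᵀ) x) ^ 2 ≤
      ∑ n : Fin N, tnorm (fun x => A x - tmul A n (Q n * (Q n)ᵀ) x) ^ 2 := by
  set P : ∀ n, Matrix (Fin (I n)) (Fin (I n)) ℝ := fun n => Q n * (Q n)ᵀ with hP
  have hPP : ∀ n, P n * P n = P n := by
    intro n
    rw [hP]
    simp only [Matrix.mul_assoc]
    rw [← Matrix.mul_assoc (Q n)ᵀ, hQ n, Matrix.one_mul]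
  have hPT : ∀ n, (P n)ᵀ = P n := by
    intro n; rw [hP]; simp [Matrix.transpose_mul]
  -- masked family
  have key : ∀ S : Finset (Fin N),
      ∑ x, (A x - multiProj A (fun m => if m ∈ S then P m else 1) x) ^ 2 ≤
        ∑ n ∈ S, ∑ x, (A x - tmul A n (P n) x) ^ 2 := by
    intro S
    induction S using Finset.induction_on with
    | empty =>
      simp only [Finset.notMem_empty, if_false, Finset.sum_empty]
      rw [show (fun m : Fin N => (1 : Matrix (Fin (I m)) (Fin (I m)) ℝ)) = fun _ => 1 from rfl,
        multiProj_one]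
      simp
    | @insert n S hn ih =>
      have hmask : (fun m => if m ∈ insert n S then P m else 1)
          = Function.update (fun m => if m ∈ S then P m else 1) n (P n * (if n ∈ S then P n else 1)) := by
        funext m
        rcases eq_or_ne m n with rfl | hm
        · simp [hn]
        · rw [Function.update_of_ne hm]
          simp [Finset.mem_insert, hm]
      have hstep : multiProj A (fun m => if m ∈ insert n S then P m else 1)
          = tmul (multiProj A (fun m => if m ∈ S then P m else 1)) n (P n) := by
        rw [tmul_multiProj, hmask]
      set G := multiProj A (fun m => if m ∈ S then P m else 1) with hG
      rw [hstep]
      have hdecomp : ∀ x, A x - tmul G n (P n) x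
          = (A x - tmul A n (P n) x) + tmul (fun y => A y - G y) n (P n) x := by
        intro x
        rw [tmul_sub]
        ring
      have hcross := cross_zero A (fun y => A y - G y) n (P n) (hPP n) (hPT n)
      have hexpand : ∑ x, (A x - tmul G n (P n) x) ^ 2
          = ∑ x, (A x - tmul A n (P n) x) ^ 2
            + ∑ x, tmul (fun y => A y - G y) n (P n) x ^ 2 := by
        calc ∑ x, (A x - tmul G n (P n) x) ^ 2
            = ∑ x, ((A x - tmul A n (P n) x) ^ 2
              + 2 * ((A x - tmul A n (P n) x) * tmul (fun y => A y - G y) n (P n) x)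
              + tmul (fun y => A y - G y) n (P n) x ^ 2) := by
              refine Finset.sum_congr rfl fun x _ => ?_
              rw [hdecomp x]; ring
          _ = _ := by
              rw [Finset.sum_add_distrib, Finset.sum_add_distrib, ← Finset.mul_sum, hcross]
              ring
      rw [hexpand, Finset.sum_insert hn]
      have hcontr := tmul_contract (fun y => A y - G y) n (P n) (hPP n) (hPT n)
      have := ih
      linarith
  have huniv := key Finset.univ
  simp only [Finset.mem_univ, if_true] at huniv
  have h1 : tnorm (fun x => A x - multiProj A (fun n => Q n * (Q n)ᵀ) x) ^ 2
      = ∑ x, (A x - multiProj A (fun n => Q n * (Q n)ᵀ) x) ^ 2 := by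
    rw [tnorm, Real.sq_sqrt (Finset.sum_nonneg fun x _ => sq_nonneg _)]
  have h2 : ∀ n : Fin N, tnorm (fun x => A x - tmul A n (Q n * (Q n)ᵀ) x) ^ 2
      = ∑ x, (A x - tmul A n (Q n * (Q n)ᵀ) x) ^ 2 := by
    intro n
    rw [tnorm, Real.sq_sqrt (Finset.sum_nonneg fun x _ => sq_nonneg _)]
  rw [h1]
  simp only [h2]
  exact huniv


end
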